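/- arXiv:2406.03987 — 2 statements merged into one kernel-verified Lean document; each statement's English description precedes it below -/
import Mathlib

section
/- If d is a divisor of degree strictly greater than 2g − 2 on a connected weightless loopless multigraph G of genus g, then r_G(d) = deg(d) − g. -/
set_option linter.unusedSectionVars false
set_option maxHeartbeats 1000000


open Finset

section Preliminaries

variable {V : Type} [Fintype V] [DecidableEq V]

/-- The degree of a divisor on a graph with vertex set `V`. -/
def degDiv (d : V → ℤ) : ℤ := ∑ v, d v

/-- A divisor is effective if it is nonnegative at every vertex. -/
def Effective (d : V → ℤ) : Prop := ∀ v, 0 ≤ d v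

/-- The principal divisor `t_Z` associated to a subset `Z` of vertices, for the
graph with edge multiplicity function `m`. -/
def tZ (m : V → V → ℕ) (Z : Finset V) : V → ℤ := fun v =>
  if v ∈ Z then -(∑ u ∈ Zᶜ, (m v u : ℤ)) else ∑ u ∈ Z, (m v u : ℤ)

/-- Two divisors are linearly equivalent if their difference lies in the subgroup
generated by the divisors `t_Z`. -/
def LinEquiv (m : V → V → ℕ) (d d' : V → ℤ) : Prop :=
  d - d' ∈ AddSubgroup.closure (Set.range (tZ m))

/-- The simple graph associated to an edge multiplicity function `m`
(an edge between distinct `u`, `v` whenever `m u v > 0`; loops are discarded). -/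
def assocGraph (m : V → V → ℕ) : SimpleGraph V where
  Adj u v := u ≠ v ∧ (0 < m u v ∨ 0 < m v u)
  symm := ⟨fun _ _ h => ⟨h.1.symm, h.2.symm⟩⟩
  loopless := ⟨fun _ h => h.1 rfl⟩

end Preliminaries

section Rank

variable {V : Type} [Fintype V] [DecidableEq V]

/-- The set of integers `k` such that either `k = -1`, or `k ≥ 0` and for every
effective divisor `e` of degree `k`, the divisor `d - e` is linearly equivalent
to an effective divisor. -/
def bnRankSet (m : V → V → ℕ) (d : V → ℤ) : Set ℤ :=
  {k : ℤ | k = -1 ∨ (0 ≤ k ∧ ∀ e : V → ℤ, Effective e → degDiv e = k →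
      ∃ f : V → ℤ, Effective f ∧ LinEquiv m (d - e) f)}

/-- The Baker–Norine rank of a divisor `d` on the weightless loopless multigraph
with edge multiplicity function `m`. -/
noncomputable def bnRank (m : V → V → ℕ) (d : V → ℤ) : ℤ := sSup (bnRankSet m d)

end Rank

section Genus

variable {V : Type} [Fintype V] [DecidableEq V]

/-- The genus of a weightless loopless multigraph: `|E| - |V| + 1` where
`|E| = (1/2) ∑_{u,v} m u v`. -/
def genus (m : V → V → ℕ) : ℤ :=
  (∑ u, ∑ v, (m u v : ℤ)) / 2 - Fintype.card V + 1

/-- The canonical divisor of a weightless loopless multigraph: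
`k_G(v) = val(v) - 2`. -/
def canonical (m : V → V → ℕ) : V → ℤ := fun v => (∑ u, (m v u : ℤ)) - 2

end Genus


section Aux
open Finset

section AuxPrelim
variable {V : Type} [Fintype V] [DecidableEq V]


def lap (m : V → V → ℕ) (σ : V → ℤ) : V → ℤ := fun v => ∑ u, (m v u : ℤ) * (σ u - σ v)

lemma lap_add (m : V → V → ℕ) (σ τ : V → ℤ) : lap m (σ + τ) = lap m σ + lap m τ := by
  funext v
  simp only [lap, Pi.add_apply, ← Finset.sum_add_distrib]
  congr 1; funext u; ring

lemma lap_neg (m : V → V → ℕ) (σ : V → ℤ) : lap m (-σ) = -(lap m σ) := by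
  funext v
  simp only [lap, Pi.neg_apply, ← Finset.sum_neg_distrib]
  congr 1; funext u; ring

lemma lap_sub (m : V → V → ℕ) (σ τ : V → ℤ) : lap m (σ - τ) = lap m σ - lap m τ := by
  rw [sub_eq_add_neg, lap_add, lap_neg, sub_eq_add_neg]

lemma lap_zero (m : V → V → ℕ) : lap m 0 = 0 := by
  funext v; simp [lap]

lemma lap_smul (m : V → V → ℕ) (c : ℤ) (σ : V → ℤ) : lap m (c • σ) = c • lap m σ := by
  funext v
  simp only [lap, Pi.smul_apply, smul_eq_mul, Finset.mul_sum]
  congr 1; funext u; ring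

/-- The subgroup of principal divisors, as the range of the Laplacian. -/
def lapRange (m : V → V → ℕ) : AddSubgroup (V → ℤ) where
  carrier := Set.range (lap m)
  add_mem' := by rintro _ _ ⟨σ, rfl⟩ ⟨τ, rfl⟩; exact ⟨σ + τ, lap_add m σ τ⟩
  zero_mem' := ⟨0, lap_zero m⟩
  neg_mem' := by rintro _ ⟨σ, rfl⟩; exact ⟨-σ, lap_neg m σ⟩

lemma tZ_eq_lap (m : V → V → ℕ) (Z : Finset V) :
    tZ m Z = lap m (fun u => if u ∈ Z then 1 else 0) := by
  funext v
  by_cases hv : v ∈ Z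
  · simp only [tZ, hv, if_true, lap]
    rw [Finset.sum_congr rfl (fun u _ => show (m v u:ℤ) * ((if u ∈ Z then (1:ℤ) else 0) - 1)
        = (if u ∈ Zᶜ then -(m v u:ℤ) else 0) from by by_cases hu : u ∈ Z <;> simp [hu]),
      Finset.sum_ite_mem, Finset.univ_inter, Finset.sum_neg_distrib]
  · simp only [tZ, hv, if_false, lap]
    rw [Finset.sum_congr rfl (fun u _ => show (m v u:ℤ) * ((if u ∈ Z then (1:ℤ) else 0) - 0)
        = (if u ∈ Z then (m v u:ℤ) else 0) from by by_cases hu : u ∈ Z <;> simp [hu]),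
      Finset.sum_ite_mem, Finset.univ_inter]

lemma lap_eq_sum_tZ (m : V → V → ℕ) (σ : V → ℤ) :
    lap m σ = ∑ v, σ v • tZ m {v} := by
  have h1 : σ = ∑ v, σ v • (fun u => if u ∈ ({v} : Finset V) then (1:ℤ) else 0) := by
    funext u
    simp only [Finset.sum_apply, Pi.smul_apply, smul_eq_mul, Finset.mem_singleton]
    have h2 : ∀ x, σ x * (if u = x then (1:ℤ) else 0) = if u = x then σ x else 0 := by
      intro x; by_cases h : u = x <;> simp [h]
    simp [h2]
  conv_lhs => rw [h1]
  rw [show (lap m (∑ v, σ v • (fun u => if u ∈ ({v} : Finset V) then (1:ℤ) else 0)))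
      = ∑ v, σ v • lap m (fun u => if u ∈ ({v} : Finset V) then (1:ℤ) else 0) by
    induction (Finset.univ : Finset V) using Finset.induction with
    | empty => simp [lap_zero]
    | insert _ _ h ih => rw [Finset.sum_insert h, lap_add, lap_smul, ih, Finset.sum_insert h]]
  exact Finset.sum_congr rfl (fun v _ => by rw [← tZ_eq_lap])

lemma closure_eq_lapRange (m : V → V → ℕ) :
    AddSubgroup.closure (Set.range (tZ m)) = lapRange m := by
  apply le_antisymm
  · rw [AddSubgroup.closure_le]
    rintro _ ⟨Z, rfl⟩
    have : tZ m Z ∈ Set.range (lap m) := ⟨(fun u => if u ∈ Z then 1 else 0), (tZ_eq_lap m Z).symm⟩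
    exact this
  · rintro _ ⟨σ, rfl⟩
    rw [lap_eq_sum_tZ]
    exact AddSubgroup.sum_mem _ (fun v _ =>
      AddSubgroup.zsmul_mem _ (AddSubgroup.subset_closure (Set.mem_range_self {v})) _)

lemma linEquiv_iff (m : V → V → ℕ) (d d' : V → ℤ) :
    LinEquiv m d d' ↔ ∃ σ : V → ℤ, d - d' = lap m σ := by
  rw [LinEquiv, closure_eq_lapRange]
  constructor
  · intro h
    obtain ⟨σ, hs⟩ := (show d - d' ∈ Set.range (lap m) from h)
    exact ⟨σ, hs.symm⟩
  · rintro ⟨σ, h⟩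
    exact (show d - d' ∈ Set.range (lap m) from ⟨σ, h.symm⟩)

lemma degDiv_lap (m : V → V → ℕ) (hsymm : ∀ u v, m u v = m v u) (σ : V → ℤ) :
    degDiv (lap m σ) = 0 := by
  have h0 : ∀ v u, (m v u:ℤ) * (σ u - σ v) = (m v u:ℤ)*σ u - (m v u:ℤ)*σ v := fun v u => by ring
  simp only [degDiv, lap, h0, Finset.sum_sub_distrib]
  rw [Finset.sum_comm (f := fun v u => (m v u:ℤ) * σ u), sub_eq_zero]
  exact Finset.sum_congr rfl fun u _ => Finset.sum_congr rfl fun v _ => by rw [hsymm]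

lemma lap_pairing (m : V → V → ℕ) (hsymm : ∀ u v, m u v = m v u) (σ w : V → ℤ) :
    ∑ v, lap m σ v * w v = ∑ v, σ v * lap m w v := by
  have h1 : ∀ v, lap m σ v * w v = ∑ u, ((m v u:ℤ) * σ u * w v - (m v u:ℤ) * σ v * w v) := by
    intro v; rw [lap, Finset.sum_mul]; exact Finset.sum_congr rfl fun u _ => by ring
  have h2 : ∀ v, σ v * lap m w v = ∑ u, ((m v u:ℤ) * σ v * w u - (m v u:ℤ) * σ v * w v) := by
    intro v; rw [lap, Finset.mul_sum]; exact Finset.sum_congr rfl fun u _ => by ring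
  simp only [h1, h2, Finset.sum_sub_distrib]
  congr 1
  rw [Finset.sum_comm (f := fun v u => (m v u:ℤ) * σ u * w v)]
  exact Finset.sum_congr rfl fun u _ => Finset.sum_congr rfl fun v _ => by rw [hsymm v u]

end AuxPrelim

section Weight
variable {V : Type} [Fintype V] [DecidableEq V]

lemma adj_iff (m : V → V → ℕ) (hsymm : ∀ u v, m u v = m v u) (u v : V) :
    (assocGraph m).Adj u v ↔ u ≠ v ∧ 0 < m u v := by
  constructor
  · rintro ⟨hne, h | h⟩
    · exact ⟨hne, h⟩
    · exact ⟨hne, by rw [hsymm]; exact h⟩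
  · rintro ⟨hne, h⟩
    exact ⟨hne, Or.inl h⟩

lemma exists_closer_neighbor (m : V → V → ℕ) (hsymm : ∀ u v, m u v = m v u)
    (hconn : (assocGraph m).Connected) (q v : V) (hv : v ≠ q) :
    ∃ u, 0 < m v u ∧ (assocGraph m).dist u q < (assocGraph m).dist v q := by
  obtain ⟨p, hp⟩ := hconn.exists_walk_length_eq_dist v q
  cases p with
  | nil => exact absurd rfl hv
  | @cons _ u _ h p' =>
    refine ⟨u, ((adj_iff m hsymm v u).mp h).2, ?_⟩
    have h1 : (assocGraph m).dist u q ≤ p'.length := SimpleGraph.dist_le p'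
    have h2 : p'.length + 1 = (assocGraph m).dist v q := by
      simpa using hp
    omega

/-- The strictly superharmonic weight function. -/
noncomputable def wt (m : V → V → ℕ) (q : V) : V → ℤ := fun v =>
  -((∑ u, ∑ x, (m u x : ℤ)) + 2) ^
    ((Finset.univ.sup fun x => (assocGraph m).dist x q) - (assocGraph m).dist v q)

lemma wt_superharmonic (m : V → V → ℕ) (hsymm : ∀ u v, m u v = m v u)
    (hconn : (assocGraph m).Connected) (q v : V) (hv : v ≠ q) :
    lap m (wt m q) v ≤ -1 := by
  set A : ℤ := (∑ u, ∑ x, (m u x : ℤ)) + 2 with hA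
  set δ : V → ℕ := fun x => (assocGraph m).dist x q with hδ
  set D : ℕ := Finset.univ.sup δ with hD
  have hMnonneg : 0 ≤ ∑ u, ∑ x, (m u x : ℤ) :=
    Finset.sum_nonneg fun u _ => Finset.sum_nonneg fun x _ => Int.natCast_nonneg _
  have hA1 : (1:ℤ) ≤ A := by omega
  have hApos : (0:ℤ) < A := by omega
  have hwt : ∀ x, wt m q x = -A ^ (D - δ x) := fun x => rfl
  obtain ⟨u0, hu0m, hu0d⟩ := exists_closer_neighbor m hsymm hconn q v hv
  set k : ℕ := δ v with hk
  have hkD : k ≤ D := Finset.le_sup (f := δ) (Finset.mem_univ v)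
  have hu0k : δ u0 < k := hu0d
  -- bound for the special neighbor
  have hexp : (D - k) + 1 ≤ D - δ u0 := by omega
  have hu0bound : (m v u0 : ℤ) * (wt m q u0 - wt m q v) ≤ -(A - 1) * A ^ (D - k) := by
    have hw : wt m q u0 - wt m q v ≤ -(A - 1) * A ^ (D - k) := by
      rw [hwt, hwt]
      have : A ^ ((D - k) + 1) ≤ A ^ (D - δ u0) := pow_le_pow_right₀ hA1 hexp
      have h2 : A ^ ((D-k)+1) = A * A ^ (D - k) := by ring
      nlinarith [pow_pos hApos (D - k)]
    have hwneg : wt m q u0 - wt m q v ≤ 0 := by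
      nlinarith [pow_pos hApos (D - k), hw]
    have h1 : (1:ℤ) ≤ (m v u0 : ℤ) := by exact_mod_cast hu0m
    calc (m v u0 : ℤ) * (wt m q u0 - wt m q v) ≤ 1 * (wt m q u0 - wt m q v) :=
          mul_le_mul_of_nonpos_right h1 hwneg
      _ = wt m q u0 - wt m q v := one_mul _
      _ ≤ -(A - 1) * A ^ (D - k) := hw
  -- generic bound
  have hgen : ∀ u, (m v u : ℤ) * (wt m q u - wt m q v) ≤ (m v u : ℤ) * A ^ (D - k) := by
    intro u
    apply mul_le_mul_of_nonneg_left _ (Int.natCast_nonneg _)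
    rw [hwt, hwt, show D - δ v = D - k from by rw [hk]]
    have := pow_pos hApos (D - δ u)
    omega
  have hsplit : lap m (wt m q) v
      = (m v u0 : ℤ) * (wt m q u0 - wt m q v)
        + ∑ u ∈ Finset.univ.erase u0, (m v u : ℤ) * (wt m q u - wt m q v) := by
    rw [lap, ← Finset.add_sum_erase _ _ (Finset.mem_univ u0)]
  have hsum2 : ∑ u ∈ Finset.univ.erase u0, (m v u : ℤ) * (wt m q u - wt m q v)
      ≤ (∑ u, ∑ x, (m u x : ℤ)) * A ^ (D - k) := by
    calc ∑ u ∈ Finset.univ.erase u0, (m v u : ℤ) * (wt m q u - wt m q v)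
        ≤ ∑ u ∈ Finset.univ.erase u0, (m v u : ℤ) * A ^ (D - k) :=
          Finset.sum_le_sum fun u _ => hgen u
      _ ≤ ∑ u, (m v u : ℤ) * A ^ (D - k) := Finset.sum_le_sum_of_subset_of_nonneg
          (Finset.subset_univ _) (fun u _ _ => by positivity)
      _ = (∑ u, (m v u : ℤ)) * A ^ (D - k) := by rw [Finset.sum_mul]
      _ ≤ (∑ u, ∑ x, (m u x : ℤ)) * A ^ (D - k) := by
          apply mul_le_mul_of_nonneg_right _ (by positivity)
          exact Finset.single_le_sum (f := fun u => ∑ x, (m u x : ℤ))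
            (fun u _ => Finset.sum_nonneg fun x _ => Int.natCast_nonneg _) (Finset.mem_univ v)
  have hfinal : lap m (wt m q) v ≤ -(A ^ (D - k)) := by
    rw [hsplit]
    have : -(A - 1) * A ^ (D - k) + (∑ u, ∑ x, (m u x : ℤ)) * A ^ (D - k) = -(A ^ (D - k)) := by
      rw [hA]; ring
    linarith [hu0bound, hsum2]
  have := pow_pos hApos (D - k)
  omega
end Weight

section Main
variable {V : Type} [Fintype V] [DecidableEq V]

lemma degDiv_sub (d d' : V → ℤ) : degDiv (d - d') = degDiv d - degDiv d' := by
  simp [degDiv, Finset.sum_sub_distrib]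

/-- Dhar induction: bound on sums for divisors with the reducedness property. -/
lemma dhar_bound (m : V → V → ℕ) (hsymm : ∀ u v, m u v = m v u) (hloop : ∀ v, m v v = 0)
    (q : V) (e : V → ℤ)
    (hP : ∀ Z : Finset V, Z.Nonempty → q ∉ Z → ∃ v ∈ Z, e v + tZ m Z v < 0) :
    ∀ Z : Finset V, q ∉ Z →
      2 * ∑ v ∈ Z, (e v + 1) ≤
        2 * (∑ v ∈ Z, ∑ u ∈ Zᶜ, (m v u : ℤ)) + ∑ v ∈ Z, ∑ u ∈ Z, (m v u : ℤ) := by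
  intro Z
  induction Z using Finset.strongInduction with
  | _ Z ih =>
    intro hqZ
    rcases Z.eq_empty_or_nonempty with rfl | hne
    · simp
    obtain ⟨v, hvZ, hvlt⟩ := hP Z hne hqZ
    have hvq : v ≠ q := fun h => hqZ (h ▸ hvZ)
    set Z' := Z.erase v with hZ'
    have hsub : Z' ⊂ Z := Finset.erase_ssubset hvZ
    have hqZ' : q ∉ Z' := fun h => hqZ (Finset.mem_of_mem_erase h)
    have IH := ih Z' hsub hqZ'
    have hva : e v + 1 ≤ ∑ u ∈ Zᶜ, (m v u : ℤ) := by
      have : tZ m Z v = -(∑ u ∈ Zᶜ, (m v u : ℤ)) := by simp [tZ, hvZ]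
      omega
    -- decompositions
    have hcompl : Z'ᶜ = insert v Zᶜ := by
      rw [hZ', Finset.compl_erase]
    have hvnc : v ∉ Zᶜ := by simp [hvZ]
    have hii : ∀ v' ∈ Z', ∑ u ∈ Z'ᶜ, (m v' u : ℤ) = (m v' v : ℤ) + ∑ u ∈ Zᶜ, (m v' u : ℤ) := by
      intro v' _
      rw [hcompl, Finset.sum_insert hvnc]
    have hT1 : ∑ v' ∈ Z, ∑ u ∈ Zᶜ, (m v' u : ℤ)
        = (∑ u ∈ Zᶜ, (m v u : ℤ)) + ((∑ v' ∈ Z', ∑ u ∈ Z'ᶜ, (m v' u : ℤ))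
          - ∑ v' ∈ Z', (m v' v : ℤ)) := by
      rw [← Finset.add_sum_erase _ _ hvZ, ← hZ']
      congr 1
      rw [Finset.sum_congr rfl hii, Finset.sum_add_distrib]
      ring
    have hinner : ∀ v' ∈ Z', ∑ u ∈ Z, (m v' u : ℤ) = (m v' v : ℤ) + ∑ u ∈ Z', (m v' u : ℤ) := by
      intro v' _
      rw [← Finset.add_sum_erase _ _ hvZ, ← hZ']
    have hbb : ∑ u ∈ Z, (m v u : ℤ) = ∑ u ∈ Z', (m v u : ℤ) := by
      rw [← Finset.add_sum_erase _ _ hvZ, ← hZ', hloop v]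
      simp
    have hsymmsum : ∑ v' ∈ Z', (m v' v : ℤ) = ∑ u ∈ Z', (m v u : ℤ) :=
      Finset.sum_congr rfl (fun v' _ => by rw [hsymm])
    have hT2 : ∑ v' ∈ Z, ∑ u ∈ Z, (m v' u : ℤ)
        = 2 * (∑ u ∈ Z', (m v u : ℤ)) + ∑ v' ∈ Z', ∑ u ∈ Z', (m v' u : ℤ) := by
      rw [← Finset.add_sum_erase _ _ hvZ, ← hZ', Finset.sum_congr rfl hinner,
        Finset.sum_add_distrib, hsymmsum, hbb]
      ring
    have hLHS : ∑ v' ∈ Z, (e v' + 1) = (e v + 1) + ∑ v' ∈ Z', (e v' + 1) := by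
      rw [← Finset.add_sum_erase _ _ hvZ, ← hZ']
    have hb0 : 0 ≤ ∑ u ∈ Z', (m v u : ℤ) :=
      Finset.sum_nonneg fun u _ => Int.natCast_nonneg _
    rw [hLHS, hT1, hT2]
    rw [hsymmsum]
    linarith
end Main

section Exists
variable {V : Type} [Fintype V] [DecidableEq V]

theorem exists_effective_rep (m : V → V → ℕ) (hsymm : ∀ u v, m u v = m v u)
    (hloop : ∀ v, m v v = 0) (hconn : (assocGraph m).Connected)
    (d : V → ℤ) (hdeg : genus m ≤ degDiv d) :
    ∃ f : V → ℤ, Effective f ∧ LinEquiv m d f := by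
  haveI : Nonempty V := hconn.nonempty
  obtain ⟨q⟩ := ‹Nonempty V›
  set w : V → ℤ := wt m q with hw
  have hW : ∀ v, v ≠ q → lap m w v ≤ -1 := fun v hv => wt_superharmonic m hsymm hconn q v hv
  -- the family of "partially effective" representatives
  set P : (V → ℤ) → Prop := fun d' => (∃ σ, d - d' = lap m σ) ∧ ∀ v, v ≠ q → 0 ≤ d' v with hPdef
  -- P is nonempty
  have hPne : ∃ d', P d' := by
    set c : ℤ := ∑ v, max 0 (-(d v)) with hc
    have hc0 : 0 ≤ c := Finset.sum_nonneg fun v _ => le_max_left _ _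
    have hcv : ∀ v, -(d v) ≤ c := fun v =>
      le_trans (le_max_right _ _) (Finset.single_le_sum (f := fun v => max 0 (-(d v)))
        (fun v _ => le_max_left _ _) (Finset.mem_univ v))
    refine ⟨d - lap m (c • w), ⟨c • w, by ring⟩, fun v hv => ?_⟩
    have h1 : lap m (c • w) v = c * lap m w v := by rw [lap_smul]; rfl
    have h2 := hW v hv
    have := hcv v
    simp only [Pi.sub_apply, h1]
    nlinarith
  -- degree is preserved
  have hdegP : ∀ d', P d' → degDiv d' = degDiv d := by
    rintro d' ⟨⟨σ, hσ⟩, -⟩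
    have := degDiv_lap m hsymm σ
    rw [← hσ, degDiv_sub] at this
    omega
  -- the potential is bounded below on P
  have hbdd : ∀ d', P d' → degDiv d * w q ≤ ∑ v, d' v * w v := by
    rintro d' hP'
    have hular : ∀ v, w q ≤ w v := by
      intro v
      show -((∑ u, ∑ x, (m u x : ℤ)) + 2) ^ (Finset.univ.sup (fun x => (assocGraph m).dist x q)
          - (assocGraph m).dist q q) ≤ wt m q v
      rw [SimpleGraph.dist_self, Nat.sub_zero]
      show _ ≤ -((∑ u, ∑ x, (m u x : ℤ)) + 2) ^ (_ - (assocGraph m).dist v q)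
      have hA1 : (1:ℤ) ≤ (∑ u, ∑ x, (m u x : ℤ)) + 2 := by
        have : 0 ≤ ∑ u, ∑ x, (m u x : ℤ) :=
          Finset.sum_nonneg fun u _ => Finset.sum_nonneg fun x _ => Int.natCast_nonneg _
        omega
      have := pow_le_pow_right₀ hA1 (Nat.sub_le (Finset.univ.sup fun x => (assocGraph m).dist x q)
        ((assocGraph m).dist v q))
      omega
    calc degDiv d * w q = ∑ v, d' v * w q := by
          rw [← hdegP d' hP', degDiv, Finset.sum_mul]
      _ ≤ ∑ v, d' v * w v := by
          apply Finset.sum_le_sum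
          intro v _
          by_cases hv : v = q
          · subst hv; exact le_refl _
          · exact mul_le_mul_of_nonneg_left (hular v) (hP'.2 v hv)
  -- choose a minimizer of the potential
  obtain ⟨z, ⟨dstar, hPstar, hzval⟩, hleast⟩ :=
    Int.exists_least_of_bdd (P := fun z => ∃ d', P d' ∧ ∑ v, d' v * w v = z)
      ⟨degDiv d * w q, by rintro z ⟨d', hP', rfl⟩; exact hbdd d' hP'⟩
      (by obtain ⟨d0, h0⟩ := hPne; exact ⟨_, d0, h0, rfl⟩)
  -- the Dhar property at the minimizer
  have hDhar : ∀ Z : Finset V, Z.Nonempty → q ∉ Z → ∃ v ∈ Z, dstar v + tZ m Z v < 0 := by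
    intro Z hne hqZ
    by_contra hcon
    push_neg at hcon
    set d'' : V → ℤ := dstar + tZ m Z with hd''
    have hPd'' : P d'' := by
      constructor
      · obtain ⟨σ, hσ⟩ := hPstar.1
        refine ⟨σ - (fun u => if u ∈ Z then 1 else 0), ?_⟩
        rw [lap_sub, ← hσ, ← tZ_eq_lap]
        ring
      · intro v hv
        by_cases hvZ : v ∈ Z
        · exact hcon v hvZ
        · have h1 : tZ m Z v = ∑ u ∈ Z, (m v u : ℤ) := by simp [tZ, hvZ]
          have h2 : (0:ℤ) ≤ ∑ u ∈ Z, (m v u : ℤ) :=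
            Finset.sum_nonneg fun u _ => Int.natCast_nonneg _
          have h3 := hPstar.2 v hv
          have : d'' v = dstar v + tZ m Z v := rfl
          omega
    have hpair : ∑ v, tZ m Z v * w v = ∑ v ∈ Z, lap m w v := by
      rw [tZ_eq_lap m Z, lap_pairing m hsymm]
      rw [Finset.sum_congr rfl (fun v _ => show (if v ∈ Z then (1:ℤ) else 0) * lap m w v
          = (if v ∈ Z then lap m w v else 0) from by by_cases h : v ∈ Z <;> simp [h]),
        Finset.sum_ite_mem, Finset.univ_inter]
    have hΦ : ∑ v, d'' v * w v = z + ∑ v ∈ Z, lap m w v := by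
      rw [← hzval, ← hpair, ← Finset.sum_add_distrib]
      exact Finset.sum_congr rfl fun v _ => by
        show (dstar v + tZ m Z v) * w v = _
        ring
    have hneg : ∑ v ∈ Z, lap m w v ≤ -1 := by
      obtain ⟨v0, hv0⟩ := hne
      have h1 : ∀ v ∈ Z, lap m w v ≤ -1 := fun v hvZ => hW v (fun h => hqZ (h ▸ hvZ))
      calc ∑ v ∈ Z, lap m w v ≤ ∑ v ∈ Z, (-1 : ℤ) := Finset.sum_le_sum h1
        _ = -(Z.card : ℤ) := by simp
        _ ≤ -1 := by
            have : 1 ≤ Z.card := Finset.card_pos.mpr ⟨v0, hv0⟩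
            omega
    have hge := hleast _ ⟨d'', hPd'', rfl⟩
    omega
  -- apply the Dhar bound with Z = {q}ᶜ
  have hqc : q ∉ ({q}ᶜ : Finset V) := by simp
  have hB := dhar_bound m hsymm hloop q dstar hDhar ({q}ᶜ) hqc
  set S : ℤ := ∑ u, ∑ x, (m u x : ℤ) with hS
  have hcc : (({q}ᶜ : Finset V)ᶜ) = ({q} : Finset V) := compl_compl _
  have hRHS : 2 * (∑ v ∈ ({q}ᶜ : Finset V), ∑ u ∈ (({q}ᶜ : Finset V)ᶜ), (m v u : ℤ))
      + ∑ v ∈ ({q}ᶜ : Finset V), ∑ u ∈ ({q}ᶜ : Finset V), (m v u : ℤ) = S := by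
    rw [hcc]
    have h1 : ∀ v, ∑ u ∈ ({q} : Finset V), (m v u : ℤ) = (m v q : ℤ) := fun v =>
      Finset.sum_singleton _ _
    have h2 : S = ∑ v ∈ ({q} : Finset V), (∑ u, (m v u : ℤ))
        + ∑ v ∈ ({q}ᶜ : Finset V), (∑ u, (m v u : ℤ)) :=
      (Finset.sum_add_sum_compl ({q} : Finset V) _).symm
    have h3 : ∀ v, (∑ u, (m v u : ℤ)) = (m v q : ℤ) + ∑ u ∈ ({q}ᶜ : Finset V), (m v u : ℤ) := by
      intro v
      rw [← Finset.sum_add_sum_compl ({q} : Finset V) (fun u => (m v u : ℤ)),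
        Finset.sum_singleton]
    have h4 : ∑ u ∈ ({q}ᶜ : Finset V), (m q u : ℤ) = ∑ v ∈ ({q}ᶜ : Finset V), (m v q : ℤ) :=
      Finset.sum_congr rfl fun u _ => by rw [hsymm]
    rw [Finset.sum_congr rfl (fun v _ => h1 v), h2, Finset.sum_singleton, h3 q, hloop q,
      Finset.sum_congr rfl (fun v (_ : v ∈ ({q}ᶜ : Finset V)) => h3 v), Finset.sum_add_distrib,
      h4]
    push_cast
    ring
  rw [hRHS] at hB
  have hLHSsum : ∑ v ∈ ({q}ᶜ : Finset V), (dstar v + 1)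
      = (∑ v ∈ ({q}ᶜ : Finset V), dstar v) + ((Fintype.card V : ℤ) - 1) := by
    rw [Finset.sum_add_distrib]
    congr 1
    rw [Finset.sum_const, Finset.card_compl, Finset.card_singleton, nsmul_eq_mul, mul_one]
    have hn : 1 ≤ Fintype.card V := Fintype.card_pos
    omega
  have hhalf : (∑ v ∈ ({q}ᶜ : Finset V), dstar v) + ((Fintype.card V : ℤ) - 1) ≤ S / 2 := by
    rw [Int.le_ediv_iff_mul_le (by norm_num : (0:ℤ) < 2)]
    omega
  have hgenus : (∑ v ∈ ({q}ᶜ : Finset V), dstar v) ≤ genus m := by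
    rw [genus, ← hS]
    omega
  have hdegstar : degDiv dstar = dstar q + ∑ v ∈ ({q}ᶜ : Finset V), dstar v := by
    rw [degDiv, ← Finset.sum_add_sum_compl ({q} : Finset V) dstar, Finset.sum_singleton]
  have hdeg' : degDiv dstar = degDiv d := hdegP dstar hPstar
  refine ⟨dstar, ?_, ?_⟩
  · intro v
    by_cases hv : v = q
    · subst hv
      omega
    · exact hPstar.2 v hv
  · rw [linEquiv_iff]
    exact hPstar.1
end Exists

section Nu
variable {V : Type} [Fintype V] [DecidableEq V]

/-- The divisor `ν` associated to a total order on the vertices. -/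
def nuDiv (m : V → V → ℕ) (ρ : V ≃ Fin (Fintype.card V)) : V → ℤ := fun v =>
  (∑ u ∈ Finset.univ.filter (fun u => ρ u < ρ v), (m v u : ℤ)) - 1

lemma degDiv_nuDiv (m : V → V → ℕ) (hsymm : ∀ u v, m u v = m v u) (hloop : ∀ v, m v v = 0)
    (ρ : V ≃ Fin (Fintype.card V)) :
    degDiv (nuDiv m ρ) = genus m - 1 := by
  set S : ℤ := ∑ u, ∑ x, (m u x : ℤ) with hS
  set Pv : ℤ := ∑ v, ∑ u ∈ Finset.univ.filter (fun u => ρ u < ρ v), (m v u : ℤ) with hPv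
  have hsplit : ∀ v u, (m v u : ℤ) = (if ρ u < ρ v then (m v u : ℤ) else 0)
      + (if ρ v < ρ u then (m v u : ℤ) else 0) := by
    intro v u
    rcases lt_trichotomy (ρ u) (ρ v) with h | h | h
    · simp [h, asymm h]
    · have : u = v := ρ.injective h
      subst this
      simp [hloop]
    · simp [h, asymm h]
  have hswap : ∑ v, ∑ u, (if ρ v < ρ u then (m v u : ℤ) else 0) = Pv := by
    rw [Finset.sum_comm]
    rw [hPv]
    refine Finset.sum_congr rfl fun v _ => ?_
    rw [Finset.sum_filter]
    exact Finset.sum_congr rfl fun u _ => by rw [hsymm u v]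
  have hStwo : S = 2 * Pv := by
    rw [hS]
    calc ∑ u, ∑ x, (m u x : ℤ)
        = ∑ v, ∑ u, ((if ρ u < ρ v then (m v u : ℤ) else 0)
            + (if ρ v < ρ u then (m v u : ℤ) else 0)) :=
          Finset.sum_congr rfl fun v _ => Finset.sum_congr rfl fun u _ => hsplit v u
      _ = (∑ v, ∑ u, (if ρ u < ρ v then (m v u : ℤ) else 0))
            + ∑ v, ∑ u, (if ρ v < ρ u then (m v u : ℤ) else 0) := by
          rw [← Finset.sum_add_distrib]
          exact Finset.sum_congr rfl fun v _ => Finset.sum_add_distrib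
      _ = Pv + Pv := by
          rw [hswap]
          congr 1
          exact Finset.sum_congr rfl fun v _ => by rw [Finset.sum_filter]
      _ = 2 * Pv := by ring
  have hhalf : S / 2 = Pv := by rw [hStwo, Int.mul_ediv_cancel_left _ (by norm_num)]
  rw [degDiv, genus, ← hS, hhalf]
  simp only [nuDiv]
  rw [Finset.sum_sub_distrib, ← hPv]
  simp [Finset.card_univ]
lemma nuDiv_not_equiv_effective (m : V → V → ℕ) (hsymm : ∀ u v, m u v = m v u)
    (ρ : V ≃ Fin (Fintype.card V)) [Nonempty V] (f : V → ℤ) (hf : Effective f) :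
    ¬ LinEquiv m (nuDiv m ρ) f := by
  rw [linEquiv_iff]
  rintro ⟨σ, hσ⟩
  -- minimum value of σ
  obtain ⟨M, hMmem, hMmin⟩ := Finset.exists_min_image Finset.univ σ ⟨Classical.arbitrary V,
    Finset.mem_univ _⟩
  set A : Finset V := Finset.univ.filter (fun v => σ v = σ M) with hA
  have hAne : A.Nonempty := ⟨M, by simp [hA]⟩
  obtain ⟨v, hvA, hvmin⟩ := Finset.exists_min_image A (fun v => ρ v) hAne
  have hσv : σ v = σ M := (Finset.mem_filter.mp hvA).2
  have hmin : ∀ u, σ v ≤ σ u := fun u => hσv ▸ hMmin u (Finset.mem_univ u)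
  have hlower : ∀ u, ρ u < ρ v → σ v + 1 ≤ σ u := by
    intro u hu
    have huA : u ∉ A := fun h => absurd (hvmin u h) (not_le.mpr hu)
    have : σ u ≠ σ M := fun h => huA (by simp [hA, h])
    have := hmin u
    omega
  have hlap : (∑ u ∈ Finset.univ.filter (fun u => ρ u < ρ v), (m v u : ℤ)) ≤ lap m σ v := by
    rw [lap, Finset.sum_filter]
    refine Finset.sum_le_sum fun u _ => ?_
    by_cases hu : ρ u < ρ v
    · simp only [hu, if_true]
      have h1 := hlower u hu
      have h2 : (0:ℤ) ≤ (m v u : ℤ) := Int.natCast_nonneg _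
      nlinarith
    · simp only [hu, if_false]
      have h1 := hmin u
      have h2 : (0:ℤ) ≤ (m v u : ℤ) := Int.natCast_nonneg _
      nlinarith
  have hfv := congrFun hσ v
  have hfv' : f v = nuDiv m ρ v - lap m σ v := by
    simp only [Pi.sub_apply] at hfv
    omega
  have : f v ≤ -1 := by
    rw [hfv', nuDiv]
    omega
  have := hf v
  omega
end Nu

section Assembly
variable {V : Type} [Fintype V] [DecidableEq V]

lemma degDiv_eq_of_linEquiv (m : V → V → ℕ) (hsymm : ∀ u v, m u v = m v u)
    {d d' : V → ℤ} (h : LinEquiv m d d') : degDiv d = degDiv d' := by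
  obtain ⟨σ, hσ⟩ := (linEquiv_iff m d d').mp h
  have := degDiv_lap m hsymm σ
  rw [← hσ, degDiv_sub] at this
  omega

lemma genus_nonneg (m : V → V → ℕ) (hsymm : ∀ u v, m u v = m v u)
    (hloop : ∀ v, m v v = 0) (hconn : (assocGraph m).Connected) :
    0 ≤ genus m := by
  haveI : Nonempty V := hconn.nonempty
  by_contra hneg
  push_neg at hneg
  set q : V := Classical.arbitrary V
  set d : V → ℤ := fun v => if v = q then genus m else 0 with hd
  have hdeg : degDiv d = genus m := by
    simp [degDiv, hd, Finset.sum_ite_eq]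
  obtain ⟨f, hf, hLE⟩ := exists_effective_rep m hsymm hloop hconn d (le_of_eq hdeg.symm)
  have h1 : degDiv d = degDiv f := degDiv_eq_of_linEquiv m hsymm hLE
  have h2 : 0 ≤ degDiv f := Finset.sum_nonneg fun v _ => hf v
  omega

theorem bnRank_eq (m : V → V → ℕ) (hsymm : ∀ u v, m u v = m v u) (hloop : ∀ v, m v v = 0)
    (hconn : (assocGraph m).Connected)
    (d : V → ℤ) (hdeg : 2 * genus m - 2 < degDiv d) :
    sSup (bnRankSet m d) = degDiv d - genus m := by
  haveI : Nonempty V := hconn.nonempty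
  set g : ℤ := genus m with hg
  have hg0 : 0 ≤ g := genus_nonneg m hsymm hloop hconn
  set k0 : ℤ := degDiv d - g with hk0
  set ρ : V ≃ Fin (Fintype.card V) := Fintype.equivFin V with hρ
  set ν : V → ℤ := nuDiv m ρ with hν
  have hdegν : degDiv ν = g - 1 := degDiv_nuDiv m hsymm hloop ρ
  have hk0m1 : -1 ≤ k0 := by omega
  set v0 : V := Classical.arbitrary V
  -- upper bound
  have hub : ∀ k ∈ bnRankSet m d, k ≤ k0 := by
    rintro k (rfl | ⟨hknn, hprop⟩)
    · exact hk0m1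
    by_contra hcon
    push_neg at hcon
    have hr : 0 ≤ k - (k0 + 1) := by omega
    -- effective representative of d - ν
    have hdegdν : genus m ≤ degDiv (d - ν) := by
      rw [degDiv_sub]
      omega
    obtain ⟨c', hc', hLEc⟩ := exists_effective_rep m hsymm hloop hconn (d - ν) hdegdν
    have hdegc' : degDiv c' = k0 + 1 := by
      have := degDiv_eq_of_linEquiv m hsymm hLEc
      rw [degDiv_sub] at this
      omega
    set e : V → ℤ := fun v => c' v + if v = v0 then k - (k0 + 1) else 0 with he
    have hee : Effective e := by
      intro v
      have h1 := hc' v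
      have h2 : e v = c' v + (if v = v0 then k - (k0+1) else 0) := rfl
      by_cases h : v = v0
      · rw [if_pos h] at h2; omega
      · rw [if_neg h] at h2; omega
    have hdege : degDiv e = k := by
      rw [degDiv]
      have : ∀ v, e v = c' v + (if v = v0 then k - (k0+1) else 0) := fun v => rfl
      rw [Finset.sum_congr rfl fun v _ => this v, Finset.sum_add_distrib,
        Finset.sum_ite_eq' Finset.univ v0 (fun _ => k - (k0+1))]
      simp only [Finset.mem_univ, if_true]
      rw [← degDiv, hdegc']
      ring
    obtain ⟨f, hf, hLEf⟩ := hprop e hee hdege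
    -- now ν is equivalent to the effective divisor f + (k - (k0+1))·δ_{v0}
    obtain ⟨σ1, hσ1⟩ := (linEquiv_iff m _ _).mp hLEf
    obtain ⟨σ2, hσ2⟩ := (linEquiv_iff m _ _).mp hLEc
    set f' : V → ℤ := fun v => f v + if v = v0 then k - (k0 + 1) else 0 with hf'
    have hf'eff : Effective f' := by
      intro v
      have h1 := hf v
      have h2 : f' v = f v + (if v = v0 then k - (k0+1) else 0) := rfl
      by_cases h : v = v0
      · rw [if_pos h] at h2; omega
      · rw [if_neg h] at h2; omega
    have hLEν : LinEquiv m ν f' := by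
      rw [linEquiv_iff]
      refine ⟨σ1 - σ2, ?_⟩
      funext v
      have h1 := congrFun hσ1 v
      have h2 := congrFun hσ2 v
      have h3 := congrFun (lap_sub m σ1 σ2) v
      simp only [Pi.sub_apply] at h1 h2 h3 ⊢
      rw [h3]
      have he' : e v = c' v + (if v = v0 then k - (k0+1) else 0) := rfl
      have hfv : f' v = f v + (if v = v0 then k - (k0+1) else 0) := rfl
      omega
    exact nuDiv_not_equiv_effective m hsymm ρ f' hf'eff hLEν
  -- membership
  have hmem : k0 ∈ bnRankSet m d := by
    by_cases h0 : 0 ≤ k0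
    · right
      refine ⟨h0, fun e he hdege => ?_⟩
      apply exists_effective_rep m hsymm hloop hconn (d - e)
      rw [degDiv_sub]
      omega
    · left
      omega
  exact le_antisymm (csSup_le ⟨k0, hmem⟩ hub) (le_csSup ⟨k0, hub⟩ hmem)
end Assembly


end Aux

/-- A divisor of degree greater than `2g - 2` has rank `deg(d) - g`. -/
theorem bnRank_degree_large {V : Type} [Fintype V] [DecidableEq V]
    (m : V → V → ℕ) (hsymm : ∀ u v, m u v = m v u) (hloop : ∀ v, m v v = 0)
    (hconn : (assocGraph m).Connected)
    (d : V → ℤ) (hdeg : 2 * genus m - 2 < degDiv d) :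
    bnRank m d = degDiv d - genus m := by
  exact bnRank_eq m hsymm hloop hconn d hdeg
end

section
/- Existence of uniform representatives in special classes: Let G be a connected weighted graph (possibly with loops) of genus g such that every vertex v with ω(v) = 0 satisfies m(v,v) ≥ 1 (i.e., is adjacent to a loop). Let d be a divisor on G such that both d and k_G − d are linearly equivalent to effective divisors. Then d is linearly equivalent to a uniform divisor, i.e., to a divisor d' satisfying 0 ≤ d'(v) ≤ 2ω(v) − 2 + val(v) for every vertex v. -/
open Finset

section Weighted

variable {V : Type} [Fintype V] [DecidableEq V]

/-- The valence of a vertex of a weighted graph with loops: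
`val(v) = ∑_{u ≠ v} m v u + 2 * m v v`. -/
def valence (m : V → V → ℕ) (v : V) : ℤ := (∑ u, (m v u : ℤ)) + m v v

/-- The genus of a weighted graph with loops:
`g = |E| - |V| + 1 + ∑_v ω v` where `|E| = ∑_v m v v + (1/2) ∑_{u ≠ v} m u v`. -/
def genusW (m : V → V → ℕ) (ω : V → ℕ) : ℤ :=
  ((∑ u, ∑ v, (m u v : ℤ)) + ∑ v, (m v v : ℤ)) / 2 - Fintype.card V + 1
    + ∑ v, (ω v : ℤ)

/-- The canonical divisor of a weighted graph with loops:
`k_G(v) = 2 ω(v) - 2 + val(v)`. -/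
def canonicalW (m : V → V → ℕ) (ω : V → ℕ) : V → ℤ :=
  fun v => 2 * (ω v : ℤ) - 2 + valence m v

end Weighted


section MyAux

variable {V : Type} [Fintype V] [DecidableEq V]

/-- The Laplacian of a function. -/
def Lap (m : V → V → ℕ) (φ : V → ℤ) : V → ℤ := fun v => ∑ u, (m v u : ℤ) * (φ u - φ v)

lemma Lap_zero (m : V → V → ℕ) : Lap m 0 = 0 := by
  funext v; simp [Lap]

lemma Lap_add (m : V → V → ℕ) (φ ψ : V → ℤ) : Lap m (φ + ψ) = Lap m φ + Lap m ψ := by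
  funext v
  simp only [Lap, Pi.add_apply, ← Finset.sum_add_distrib]
  exact Finset.sum_congr rfl fun u _ => by ring

lemma Lap_neg (m : V → V → ℕ) (φ : V → ℤ) : Lap m (-φ) = -(Lap m φ) := by
  funext v
  simp only [Lap, Pi.neg_apply, ← Finset.sum_neg_distrib]
  exact Finset.sum_congr rfl fun u _ => by ring

lemma Lap_sub (m : V → V → ℕ) (φ ψ : V → ℤ) : Lap m (φ - ψ) = Lap m φ - Lap m ψ := by
  rw [sub_eq_add_neg, Lap_add, Lap_neg, sub_eq_add_neg]

lemma tZ_eq_Lap (m : V → V → ℕ) (Z : Finset V) :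
    tZ m Z = Lap m (fun v => if v ∈ Z then (1:ℤ) else 0) := by
  funext v
  rw [Lap, ← Finset.sum_add_sum_compl Z]
  by_cases hv : v ∈ Z
  · have h1 : ∑ u ∈ Z, (m v u : ℤ) * ((if u ∈ Z then (1:ℤ) else 0) - (if v ∈ Z then (1:ℤ) else 0)) = 0 :=
      Finset.sum_eq_zero fun u hu => by simp [hu, hv]
    have h2 : ∑ u ∈ Zᶜ, (m v u : ℤ) * ((if u ∈ Z then (1:ℤ) else 0) - (if v ∈ Z then (1:ℤ) else 0))
        = -∑ u ∈ Zᶜ, (m v u : ℤ) := by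
      rw [← Finset.sum_neg_distrib]
      refine Finset.sum_congr rfl fun u hu => ?_
      have hu' : u ∉ Z := by simpa using hu
      simp [hu', hv]
    rw [h1, h2, tZ, if_pos hv, zero_add]
  · have h1 : ∑ u ∈ Z, (m v u : ℤ) * ((if u ∈ Z then (1:ℤ) else 0) - (if v ∈ Z then (1:ℤ) else 0))
        = ∑ u ∈ Z, (m v u : ℤ) := by
      refine Finset.sum_congr rfl fun u hu => ?_
      simp [hu, hv]
    have h2 : ∑ u ∈ Zᶜ, (m v u : ℤ) * ((if u ∈ Z then (1:ℤ) else 0) - (if v ∈ Z then (1:ℤ) else 0)) = 0 :=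
      Finset.sum_eq_zero fun u hu => by
        have hu' : u ∉ Z := by simpa using hu
        simp [hu', hv]
    rw [h1, h2, tZ, if_neg hv, add_zero]

lemma exists_Lap_of_mem_closure (m : V → V → ℕ) {x : V → ℤ}
    (hx : x ∈ AddSubgroup.closure (Set.range (tZ m))) : ∃ φ, Lap m φ = x := by
  induction hx using AddSubgroup.closure_induction with
  | mem x hx => obtain ⟨Z, rfl⟩ := hx; exact ⟨_, (tZ_eq_Lap m Z).symm⟩
  | zero => exact ⟨0, Lap_zero m⟩
  | add x y _ _ hx hy =>
      obtain ⟨φ, rfl⟩ := hx; obtain ⟨ψ, rfl⟩ := hy; exact ⟨φ + ψ, Lap_add m φ ψ⟩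
  | neg x _ hx => obtain ⟨φ, rfl⟩ := hx; exact ⟨-φ, Lap_neg m φ⟩

lemma compl_split1 {S B : Finset V} (hS : S ⊆ B) : Sᶜ = Bᶜ ∪ (B \ S) := by
  ext u
  simp only [mem_compl, mem_union, mem_sdiff]
  constructor
  · intro hu
    by_cases hB : u ∈ B
    · exact Or.inr ⟨hB, hu⟩
    · exact Or.inl hB
  · rintro (hu | ⟨-, hu⟩)
    · exact fun hs => hu (hS hs)
    · exact hu

lemma compl_split2 {S B : Finset V} (hS : S ⊆ B) : (B \ S)ᶜ = Bᶜ ∪ S := by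
  ext u
  simp only [mem_compl, mem_union, mem_sdiff, not_and, not_not]
  constructor
  · intro hu
    by_cases hB : u ∈ B
    · exact Or.inr (hu hB)
    · exact Or.inl hB
  · rintro (hu | hu)
    · exact fun hb => absurd hb hu
    · exact fun _ => hu

lemma disj1 {S B : Finset V} : Disjoint (Bᶜ : Finset V) (B \ S) :=
  disjoint_compl_left.mono_right (sdiff_subset)

lemma disj2 {S B : Finset V} (hS : S ⊆ B) : Disjoint (Bᶜ : Finset V) S :=
  disjoint_compl_left.mono_right hS

lemma tZ_split (m : V → V → ℕ) {S B : Finset V} (hS : S ⊆ B) :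
    tZ m B = tZ m S + tZ m (B \ S) := by
  funext v
  simp only [tZ, Pi.add_apply]
  by_cases hvS : v ∈ S
  · have hvB : v ∈ B := hS hvS
    have hvT : v ∉ B \ S := by simp [hvS]
    rw [if_pos hvB, if_pos hvS, if_neg hvT, compl_split1 hS, Finset.sum_union disj1]
    ring
  · by_cases hvB : v ∈ B
    · have hvT : v ∈ B \ S := mem_sdiff.mpr ⟨hvB, hvS⟩
      rw [if_pos hvB, if_neg hvS, if_pos hvT, compl_split2 hS, Finset.sum_union (disj2 hS)]
      ring
    · have hvT : v ∉ B \ S := by simp [hvB]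
      rw [if_neg hvB, if_neg hvS, if_neg hvT, ← Finset.sum_sdiff hS]
      ring

end MyAux

section MyPart
variable {V : Type} [Fintype V] [DecidableEq V]

set_option maxHeartbeats 1000000 in
lemma exists_good_partition (m : V → V → ℕ) (hsymm : ∀ u v, m u v = m v u)
    (a b : V → ℤ) (B : Finset V)
    (hstar : ∀ v ∈ B,
      (∑ u ∈ B.erase v, (m v u : ℤ)) + 2 * ∑ u ∈ Bᶜ, (m v u : ℤ) ≤ a v + b v) :
    ∃ S ⊆ B, (∀ v ∈ S, ∑ u ∈ Sᶜ, (m v u : ℤ) ≤ a v) ∧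
      (∀ v ∈ B \ S, ∑ u ∈ (B \ S)ᶜ, (m v u : ℤ) ≤ b v) := by
  classical
  obtain ⟨S, hSp, hSmax⟩ := B.powerset.exists_max_image
    (fun S => ∑ v ∈ S, a v + ∑ v ∈ B \ S, b v - ∑ x ∈ S, ∑ y ∈ B \ S, (m x y : ℤ))
    ⟨∅, mem_powerset.mpr (empty_subset B)⟩
  have hS : S ⊆ B := mem_powerset.mp hSp
  refine ⟨S, hS, ?_, ?_⟩
  · -- v ∈ S
    intro v hv
    have hvB : v ∈ B := hS hv
    have hvT : v ∉ B \ S := by simp [hv]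
    have key := hSmax (S.erase v) (mem_powerset.mpr ((erase_subset _ _).trans hS))
    have hBe : B \ S.erase v = insert v (B \ S) := by
      ext u
      by_cases huv : u = v
      · subst huv; simp [hvB]
      · simp [mem_sdiff, mem_erase, mem_insert, huv]
    have e1 : ∑ x ∈ S.erase v, a x = ∑ x ∈ S, a x - a v := by
      rw [← Finset.sum_erase_add S a hv]; ring
    have e2 : ∑ x ∈ B \ S.erase v, b x = b v + ∑ x ∈ B \ S, b x := by
      rw [hBe, Finset.sum_insert hvT]
    have e3 : ∑ x ∈ S.erase v, ∑ y ∈ B \ S.erase v, (m x y : ℤ)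
        = (∑ x ∈ S.erase v, (m x v : ℤ)) + ((∑ x ∈ S, ∑ y ∈ B \ S, (m x y : ℤ))
            - ∑ y ∈ B \ S, (m v y : ℤ)) := by
      have h4 : ∀ x ∈ S.erase v, ∑ y ∈ B \ S.erase v, (m x y : ℤ)
          = (m x v : ℤ) + ∑ y ∈ B \ S, (m x y : ℤ) := fun x _ => by
        rw [hBe, Finset.sum_insert hvT]
      rw [Finset.sum_congr rfl h4, Finset.sum_add_distrib]
      have h5 : ∑ x ∈ S.erase v, ∑ y ∈ B \ S, (m x y : ℤ)
          = (∑ x ∈ S, ∑ y ∈ B \ S, (m x y : ℤ)) - ∑ y ∈ B \ S, (m v y : ℤ) := by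
        rw [← Finset.sum_erase_add S (fun x => ∑ y ∈ B \ S, (m x y : ℤ)) hv]; ring
      rw [h5]
    rw [e1, e2, e3] at key
    have esym : ∑ x ∈ S.erase v, (m x v : ℤ) = ∑ x ∈ S.erase v, (m v x : ℤ) :=
      Finset.sum_congr rfl fun x _ => by rw [hsymm]
    rw [esym] at key
    have hsp := hstar v hvB
    have hBer : B.erase v = (S.erase v) ∪ (B \ S) := by
      ext u
      simp only [mem_erase, mem_union, mem_sdiff]
      constructor
      · rintro ⟨huv, huB⟩
        by_cases hu : u ∈ S
        · exact Or.inl ⟨huv, hu⟩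
        · exact Or.inr ⟨huB, hu⟩
      · rintro (⟨huv, hu⟩ | ⟨huB, hu⟩)
        · exact ⟨huv, hS hu⟩
        · exact ⟨fun h => hu (h ▸ hv), huB⟩
    have hdisj : Disjoint (S.erase v) (B \ S) :=
      Finset.disjoint_left.mpr fun x hx hx2 => (mem_sdiff.mp hx2).2 (mem_of_mem_erase hx)
    rw [hBer, Finset.sum_union hdisj] at hsp
    rw [compl_split1 hS, Finset.sum_union disj1]
    linarith
  · -- v ∈ B \ S
    intro v hv
    obtain ⟨hvB, hvS⟩ := mem_sdiff.mp hv
    have key := hSmax (insert v S) (mem_powerset.mpr (insert_subset hvB hS))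
    have hBi : B \ insert v S = (B \ S).erase v := by
      ext u
      simp only [mem_sdiff, mem_insert, mem_erase, not_or]
      tauto
    have e1 : ∑ x ∈ insert v S, a x = a v + ∑ x ∈ S, a x := Finset.sum_insert hvS
    have e2 : ∑ x ∈ B \ insert v S, b x = ∑ x ∈ B \ S, b x - b v := by
      rw [hBi, ← Finset.sum_erase_add (B \ S) b hv]; ring
    have e3 : ∑ x ∈ insert v S, ∑ y ∈ B \ insert v S, (m x y : ℤ)
        = (∑ y ∈ (B \ S).erase v, (m v y : ℤ))
          + ((∑ x ∈ S, ∑ y ∈ B \ S, (m x y : ℤ)) - ∑ x ∈ S, (m x v : ℤ)) := by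
      rw [hBi, Finset.sum_insert hvS]
      have h4 : ∀ x ∈ S, ∑ y ∈ (B \ S).erase v, (m x y : ℤ)
          = (∑ y ∈ B \ S, (m x y : ℤ)) - (m x v : ℤ) := fun x _ => by
        rw [← Finset.sum_erase_add (B \ S) (fun y => (m x y : ℤ)) hv]; ring
      rw [Finset.sum_congr rfl h4, Finset.sum_sub_distrib]
    rw [e1, e2, e3] at key
    have esym : ∑ x ∈ S, (m x v : ℤ) = ∑ x ∈ S, (m v x : ℤ) :=
      Finset.sum_congr rfl fun x _ => by rw [hsymm]
    rw [esym] at key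
    have hsp := hstar v hvB
    have hBer : B.erase v = S ∪ (B \ S).erase v := by
      ext u
      simp only [mem_erase, mem_union, mem_sdiff]
      constructor
      · rintro ⟨huv, huB⟩
        by_cases hu : u ∈ S
        · exact Or.inl hu
        · exact Or.inr ⟨huv, huB, hu⟩
      · rintro (hu | ⟨huv, huB, hu⟩)
        · exact ⟨fun h => hvS (h ▸ hu), hS hu⟩
        · exact ⟨huv, huB⟩
    have hdisj : Disjoint S ((B \ S).erase v) :=
      Finset.disjoint_left.mpr fun x hx hx2 =>
        (mem_sdiff.mp (mem_of_mem_erase hx2)).2 hx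
    rw [hBer, Finset.sum_union hdisj] at hsp
    rw [compl_split2 hS, Finset.sum_union (disj2 hS)]
    linarith
end MyPart

set_option maxHeartbeats 1000000 in
/-- **Existence of uniform representatives in special classes.** -/
theorem exists_uniform_representative {V : Type} [Fintype V] [DecidableEq V]
    (ω : V → ℕ) (m : V → V → ℕ) (hsymm : ∀ u v, m u v = m v u)
    (hconn : (assocGraph m).Connected)
    (hloops : ∀ v, ω v = 0 → 1 ≤ m v v)
    (d : V → ℤ)
    (h1 : ∃ f : V → ℤ, Effective f ∧ LinEquiv m d f)
    (h2 : ∃ f : V → ℤ, Effective f ∧ LinEquiv m (canonicalW m ω - d) f) :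
    ∃ d' : V → ℤ, LinEquiv m d d' ∧
      ∀ v, 0 ≤ d' v ∧ d' v ≤ canonicalW m ω v := by
  classical
  haveI hV : Nonempty V := hconn.nonempty
  obtain ⟨f, hf_eff, hf_lin⟩ := h1
  obtain ⟨f', hf'_eff, hf'_lin⟩ := h2
  set K : V → ℤ := canonicalW m ω with hKdef
  -- initial potential
  have hmem : K - f - f' ∈ AddSubgroup.closure (Set.range (tZ m)) := by
    have h := AddSubgroup.add_mem _ (show d - f ∈ _ from hf_lin)
      (show (K - d) - f' ∈ _ from hf'_lin)
    have he : d - f + ((K - d) - f') = K - f - f' := by abel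
    rwa [he] at h
  obtain ⟨ψ, hψ⟩ := exists_Lap_of_mem_closure m hmem
  have hb0' : Effective (K - Lap m ψ - f) := by
    have he : K - Lap m ψ - f = f' := by rw [hψ]; abel
    rw [he]; exact hf'_eff
  have hspread0 : (0:ℤ) ≤ univ.sup' univ_nonempty ψ - univ.inf' univ_nonempty ψ := by
    have x : V := Classical.arbitrary V
    have hle1 : univ.inf' univ_nonempty ψ ≤ ψ x := Finset.inf'_le ψ (mem_univ x)
    have hle2 : ψ x ≤ univ.sup' univ_nonempty ψ := Finset.le_sup' ψ (mem_univ x)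
    linarith
  have hfcl : f - d ∈ AddSubgroup.closure (Set.range (tZ m)) := by
    have h := AddSubgroup.neg_mem _ (show d - f ∈ _ from hf_lin)
    rwa [neg_sub] at h
  have hex : ∃ n : ℕ, ∃ φ a : V → ℤ,
      univ.sup' univ_nonempty φ - univ.inf' univ_nonempty φ = (n : ℤ) ∧
      Effective a ∧ a - d ∈ AddSubgroup.closure (Set.range (tZ m)) ∧
      Effective (K - Lap m φ - a) :=
    ⟨(univ.sup' univ_nonempty ψ - univ.inf' univ_nonempty ψ).toNat, ψ, f,
      (Int.toNat_of_nonneg hspread0).symm, hf_eff, hfcl, hb0'⟩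
  obtain ⟨φ, a, hsp, ha0, hacl, hb0⟩ := Nat.find_spec hex
  set n₀ := Nat.find hex with hn₀
  by_cases h0 : n₀ = 0
  · -- spread zero : φ is constant, a is the uniform representative
    rw [h0] at hsp
    push_cast at hsp
    have hconst : ∀ v, φ v = univ.sup' univ_nonempty φ := by
      intro v
      have hle1 : φ v ≤ univ.sup' univ_nonempty φ := Finset.le_sup' φ (mem_univ v)
      have hle2 : univ.inf' univ_nonempty φ ≤ φ v := Finset.inf'_le φ (mem_univ v)
      omega
    have hLap : ∀ v, Lap m φ v = 0 := by
      intro v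
      refine Finset.sum_eq_zero fun u _ => ?_
      rw [hconst u, hconst v]; ring
    refine ⟨a, ?_, fun v => ⟨ha0 v, ?_⟩⟩
    · show d - a ∈ AddSubgroup.closure (Set.range (tZ m))
      have h := AddSubgroup.neg_mem _ hacl
      rwa [neg_sub] at h
    · have h := hb0 v
      simp only [Pi.sub_apply] at h
      rw [hLap v] at h
      linarith
  · -- positive spread : fire the top level set, contradiction with minimality
    exfalso
    have hn1 : 1 ≤ n₀ := Nat.one_le_iff_ne_zero.mpr h0
    set M := univ.sup' univ_nonempty φ with hM
    set N := univ.inf' univ_nonempty φ with hN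
    have hNM : N + 1 ≤ M := by
      have h1 : (1:ℤ) ≤ (n₀:ℤ) := by exact_mod_cast hn1
      linarith [hsp]
    set B := univ.filter (fun v => φ v = M) with hB
    have hBmem : ∀ v, v ∈ B ↔ φ v = M := fun v => by simp [hB]
    obtain ⟨i, -, hi⟩ := Finset.exists_mem_eq_sup' (univ_nonempty) φ
    rw [← hM] at hi
    have hiB : i ∈ B := (hBmem i).mpr hi.symm
    obtain ⟨w, -, hw⟩ := Finset.exists_mem_eq_inf' (univ_nonempty) φ
    rw [← hN] at hw
    have hwB : w ∉ B := by
      rw [hBmem w]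
      intro h
      rw [h] at hw
      linarith
    set b : V → ℤ := K - Lap m φ - a with hbdef
    have hbv : ∀ v, b v = K v - Lap m φ v - a v := fun v => by rw [hbdef]; rfl
    have hstar : ∀ v ∈ B,
        (∑ u ∈ B.erase v, (m v u : ℤ)) + 2 * ∑ u ∈ Bᶜ, (m v u : ℤ) ≤ a v + b v := by
      intro v hvB
      have hφv : φ v = M := (hBmem v).mp hvB
      have h1 : ∑ u ∈ B, (m v u : ℤ) * (φ u - φ v) = 0 :=
        Finset.sum_eq_zero fun u hu => by rw [(hBmem u).mp hu, hφv]; ring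
      have h2 : ∑ u ∈ Bᶜ, (m v u : ℤ) * (φ u - φ v) ≤ ∑ u ∈ Bᶜ, -(m v u : ℤ) := by
        refine Finset.sum_le_sum fun u hu => ?_
        have huB : u ∉ B := by simpa using hu
        have hune : φ u ≠ M := fun h => huB ((hBmem u).mpr h)
        have hule : φ u ≤ M := Finset.le_sup' φ (mem_univ u)
        have hle : φ u - φ v ≤ -1 := by rw [hφv]; omega
        have hm : (0:ℤ) ≤ (m v u : ℤ) := Int.natCast_nonneg _
        nlinarith
      have hLap : Lap m φ v ≤ -∑ u ∈ Bᶜ, (m v u : ℤ) := by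
        have hdef : Lap m φ v
            = ∑ u ∈ B, (m v u : ℤ) * (φ u - φ v) + ∑ u ∈ Bᶜ, (m v u : ℤ) * (φ u - φ v) :=
          (Finset.sum_add_sum_compl B _).symm
        rw [hdef, h1, zero_add]
        calc ∑ u ∈ Bᶜ, (m v u : ℤ) * (φ u - φ v) ≤ ∑ u ∈ Bᶜ, -(m v u : ℤ) := h2
          _ = -∑ u ∈ Bᶜ, (m v u : ℤ) := by rw [Finset.sum_neg_distrib]
      have huniv : (univ : Finset V).erase v = (B.erase v) ∪ Bᶜ := by
        ext u
        simp only [mem_erase, mem_union, mem_compl, mem_univ, and_true]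
        constructor
        · intro huv
          by_cases hu : u ∈ B
          · exact Or.inl ⟨huv, hu⟩
          · exact Or.inr hu
        · rintro (⟨huv, -⟩ | hu)
          · exact huv
          · exact fun h => hu (h ▸ hvB)
      have hdisj : Disjoint (B.erase v) (Bᶜ : Finset V) :=
        (disjoint_compl_left.mono_right (erase_subset v B)).symm
      have hsum : ∑ u, (m v u : ℤ)
          = (m v v : ℤ) + ((∑ u ∈ B.erase v, (m v u : ℤ)) + ∑ u ∈ Bᶜ, (m v u : ℤ)) := by
        rw [← Finset.sum_erase_add univ _ (mem_univ v), huniv, Finset.sum_union hdisj]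
        ring
      have hKsplit : K v = (2 * (ω v : ℤ) + 2 * (m v v : ℤ) - 2)
          + ((∑ u ∈ B.erase v, (m v u : ℤ)) + ∑ u ∈ Bᶜ, (m v u : ℤ)) := by
        calc K v = 2 * (ω v : ℤ) - 2 + ((∑ u, (m v u : ℤ)) + (m v v : ℤ)) := by
              rw [hKdef]; rfl
          _ = _ := by rw [hsum]; ring
      have hloop : (0:ℤ) ≤ 2 * (ω v : ℤ) + 2 * (m v v : ℤ) - 2 := by
        rcases Nat.eq_zero_or_pos (ω v) with h | h
        · have hm1 : (1:ℤ) ≤ (m v v : ℤ) := by exact_mod_cast hloops v h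
          have hω : (0:ℤ) ≤ (ω v : ℤ) := Int.natCast_nonneg _
          linarith
        · have hω : (1:ℤ) ≤ (ω v : ℤ) := by exact_mod_cast h
          have hm1 : (0:ℤ) ≤ (m v v : ℤ) := Int.natCast_nonneg _
          linarith
      have hab : a v + b v = K v - Lap m φ v := by rw [hbv v]; ring
      linarith
    obtain ⟨S, hS, hSa, hTb⟩ := exists_good_partition m hsymm a b B hstar
    set φ' : V → ℤ := φ - (fun v => if v ∈ B then (1:ℤ) else 0) with hφ'
    set a' : V → ℤ := a + tZ m S with ha'
    have hLapφ' : Lap m φ' = Lap m φ - tZ m B := by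
      rw [hφ', Lap_sub, tZ_eq_Lap]
    have ha'0 : Effective a' := by
      intro v
      by_cases hv : v ∈ S
      · have h := hSa v hv
        show 0 ≤ a v + tZ m S v
        simp only [tZ]
        rw [if_pos hv]
        linarith
      · show 0 ≤ a v + tZ m S v
        rw [tZ, if_neg hv]
        have hpos : (0:ℤ) ≤ ∑ u ∈ S, (m v u : ℤ) :=
          Finset.sum_nonneg fun u _ => Int.natCast_nonneg _
        linarith [ha0 v]
    have hb' : K - Lap m φ' - a' = b + tZ m (B \ S) := by
      rw [hLapφ', ha', hbdef, tZ_split m hS]; abel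
    have hb'0 : Effective (K - Lap m φ' - a') := by
      rw [hb']
      intro v
      by_cases hv : v ∈ B \ S
      · have h := hTb v hv
        show 0 ≤ b v + tZ m (B \ S) v
        simp only [tZ]
        rw [if_pos hv]
        linarith
      · show 0 ≤ b v + tZ m (B \ S) v
        rw [tZ, if_neg hv]
        have hpos : (0:ℤ) ≤ ∑ u ∈ B \ S, (m v u : ℤ) :=
          Finset.sum_nonneg fun u _ => Int.natCast_nonneg _
        linarith [hb0 v]
    have ha'cl : a' - d ∈ AddSubgroup.closure (Set.range (tZ m)) := by
      have hgen : tZ m S ∈ AddSubgroup.closure (Set.range (tZ m)) :=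
        AddSubgroup.subset_closure (Set.mem_range_self S)
      have h := AddSubgroup.add_mem _ hacl hgen
      have he : (a - d) + tZ m S = a' - d := by rw [ha']; abel
      rwa [he] at h
    have hφ'v : ∀ v, φ' v = if v ∈ B then φ v - 1 else φ v := by
      intro v
      rw [hφ']
      simp only [Pi.sub_apply]
      by_cases hv : v ∈ B <;> simp [hv]
    have hsup' : univ.sup' univ_nonempty φ' = M - 1 := by
      apply le_antisymm
      · apply Finset.sup'_le
        intro v _
        rw [hφ'v v]
        by_cases hv : v ∈ B
        · rw [if_pos hv]
          have hφv : φ v = M := (hBmem v).mp hv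
          omega
        · rw [if_neg hv]
          have hle1 : φ v ≤ M := Finset.le_sup' φ (mem_univ v)
          have hne : φ v ≠ M := fun h => hv ((hBmem v).mpr h)
          omega
      · have hvi : φ' i = M - 1 := by rw [hφ'v i, if_pos hiB, ← hi]
        exact hvi ▸ Finset.le_sup' φ' (mem_univ i)
    have hinf' : univ.inf' univ_nonempty φ' = N := by
      apply le_antisymm
      · have hvw : φ' w = N := by rw [hφ'v w, if_neg hwB, ← hw]
        exact hvw ▸ Finset.inf'_le φ' (mem_univ w)
      · apply Finset.le_inf'
        intro v _
        rw [hφ'v v]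
        by_cases hv : v ∈ B
        · rw [if_pos hv]
          have hφv : φ v = M := (hBmem v).mp hv
          omega
        · rw [if_neg hv]
          exact Finset.inf'_le φ (mem_univ v)
    have hmem' : ∃ φ₂ a₂ : V → ℤ,
        univ.sup' univ_nonempty φ₂ - univ.inf' univ_nonempty φ₂ = ((n₀ - 1 : ℕ) : ℤ) ∧
        Effective a₂ ∧ a₂ - d ∈ AddSubgroup.closure (Set.range (tZ m)) ∧
        Effective (K - Lap m φ₂ - a₂) :=
      ⟨φ', a', by rw [hsup', hinf']; omega, ha'0, ha'cl, hb'0⟩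
    have hle := Nat.find_min' hex hmem'
    omega
end
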